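/- Let $f$ be a map defined on a finite union of open subintervals of a compact interval $I$, diffeomorphic on each component, and let $U \subset I$ be a regularly returning open interval, i.e. $f^n(\partial U) \cap U = \emptyset$ for all $n > 0$. If $A$ is a connected component of $f^{-n}(U)$ and $B$ is a connected component of $f^{-m}(U)$ with $m \geq n$, then either $A \cap B = \emptyset$ or $B \subset A$. -/

import Mathlib

open Set Function

lemma aux_iter_open_cont (D : Set ℝ) (hDo : IsOpen D) (f : ℝ → ℝ) (hf : ContinuousOn f D) :
    ∀ n : ℕ, IsOpen {x : ℝ | ∀ i < n, f^[i] x ∈ D} ∧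
      ContinuousOn f^[n] {x : ℝ | ∀ i < n, f^[i] x ∈ D} := by
  intro n
  induction n with
  | zero => simpa using (continuousOn_id : ContinuousOn (id : ℝ → ℝ) univ)
  | succ n ih =>
    have hset : {x : ℝ | ∀ i < n + 1, f^[i] x ∈ D} =
        {x : ℝ | ∀ i < n, f^[i] x ∈ D} ∩ f^[n] ⁻¹' D := by
      ext x
      simp only [mem_setOf_eq, mem_inter_iff, mem_preimage]
      constructor
      · exact fun h => ⟨fun i hi => h i (by omega), h n (by omega)⟩
      · rintro ⟨h1, h2⟩ i hi
        rcases Nat.lt_succ_iff_lt_or_eq.mp hi with h | rfl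
        · exact h1 i h
        · exact h2
    have hopen : IsOpen ({x : ℝ | ∀ i < n, f^[i] x ∈ D} ∩ f^[n] ⁻¹' D) :=
      ih.2.isOpen_inter_preimage ih.1 hDo
    refine ⟨hset ▸ hopen, ?_⟩
    rw [hset, Function.iterate_succ']
    exact hf.comp (ih.2.mono inter_subset_left) fun x hx => hx.2

/-- For a map `f` defined on a finite union of open subintervals of a
compact interval `I = Icc A B`, diffeomorphic (here: continuous and strictly monotone)
on each component, and a regularly returning open interval `U ⊆ I`
(`fⁿ(∂U) ∩ U = ∅` for all `n > 0`), connected components of `f^{-n}(U)` and `f^{-m}(U)`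
with `m ≥ n` are nested or disjoint. -/
theorem nested_or_disjoint_preimages_of_regularly_returning
    (A B : ℝ) (hAB : A < B)
    (p : ℕ) (a b : ℕ → ℝ)
    (D : Set ℝ) (hD : D = ⋃ j ∈ Finset.range p, Ioo (a j) (b j))
    (hDI : D ⊆ Icc A B)
    (hdisj : ∀ j ∈ Finset.range p, ∀ k ∈ Finset.range p, j ≠ k →
      Disjoint (Ioo (a j) (b j)) (Ioo (a k) (b k)))
    (f : ℝ → ℝ) (hf : ContinuousOn f D)
    (hmono : ∀ j ∈ Finset.range p,
      StrictMonoOn f (Ioo (a j) (b j)) ∨ StrictAntiOn f (Ioo (a j) (b j)))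
    (U : Set ℝ) (hU : IsOpen U) (hUconn : IsPreconnected U) (hUI : U ⊆ Icc A B)
    -- regularly returning: forward images of ∂U (along defined orbits) never re-enter U
    (hrr : ∀ k > 0, ∀ x ∈ frontier U, (∀ i < k, f^[i] x ∈ D) → f^[k] x ∉ U)
    -- `preim n` is the set where `fⁿ` is defined and lands in `U`
    (preim : ℕ → Set ℝ)
    (hpreim : ∀ n, preim n = {x | (∀ i < n, f^[i] x ∈ D) ∧ f^[n] x ∈ U})
    (n m : ℕ) (hnm : n ≤ m)
    (x y : ℝ) (hx : x ∈ preim n) (hy : y ∈ preim m)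
    (Acomp Bcomp : Set ℝ)
    (hA : Acomp = connectedComponentIn (preim n) x)
    (hB : Bcomp = connectedComponentIn (preim m) y) :
    Acomp ∩ Bcomp = ∅ ∨ Bcomp ⊆ Acomp := by
  have hDo : IsOpen D := by
    rw [hD]; exact isOpen_biUnion fun _ _ => isOpen_Ioo
  have key := aux_iter_open_cont D hDo f hf
  -- each `preim k` is open
  have hPo : ∀ k, IsOpen (preim k) := by
    intro k
    have hset : preim k = {x : ℝ | ∀ i < k, f^[i] x ∈ D} ∩ f^[k] ⁻¹' U := by
      rw [hpreim k]; ext x; simp [mem_setOf_eq, and_comm]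
    rw [hset]
    exact (key k).2.isOpen_inter_preimage (key k).1 hU
  have hAo : IsOpen Acomp := hA ▸ (hPo n).connectedComponentIn
  have hAsub : Acomp ⊆ preim n := hA ▸ connectedComponentIn_subset _ _
  have hBsub : Bcomp ⊆ preim m := hB ▸ connectedComponentIn_subset _ _
  -- frontier of a component of the open set `preim n` misses `preim n`
  have hfrA : ∀ z ∈ frontier Acomp, z ∉ preim n := by
    intro z hz hzP
    have hzc : z ∈ closure Acomp := hz.1
    have hzA : z ∉ Acomp := fun h => hz.2 (by rwa [hAo.interior_eq])
    set C := connectedComponentIn (preim n) z with hC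
    have hCo : IsOpen C := (hPo n).connectedComponentIn
    have hzC : z ∈ C := mem_connectedComponentIn hzP
    obtain ⟨w, hwC, hwA⟩ := (mem_closure_iff.mp hzc) C hCo hzC
    have h1 : C = connectedComponentIn (preim n) w := connectedComponentIn_eq hwC
    have h2 : Acomp = connectedComponentIn (preim n) w :=
      hA ▸ connectedComponentIn_eq (hA ▸ hwA)
    exact hzA (h2 ▸ h1 ▸ hzC)
  -- key claim: frontier of `Acomp` misses `preim m`
  have hkey : ∀ z ∈ frontier Acomp, z ∉ preim m := by
    intro z hz hzm
    rw [hpreim m] at hzm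
    obtain ⟨hzD, hzU⟩ := hzm
    have hzn : z ∉ preim n := hfrA z hz
    have hDn : ∀ i < n, f^[i] z ∈ D := fun i hi => hzD i (lt_of_lt_of_le hi hnm)
    have hfnU : f^[n] z ∉ U := fun h => hzn (by rw [hpreim]; exact ⟨hDn, h⟩)
    have hzW : z ∈ {x : ℝ | ∀ i < n, f^[i] x ∈ D} := hDn
    have hcontAt : ContinuousAt f^[n] z :=
      ((key n).2 z hzW).continuousAt ((key n).1.mem_nhds hzW)
    have himg : f^[n] z ∈ closure (f^[n] '' Acomp) :=
      hcontAt.continuousWithinAt.mem_closure_image hz.1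
    have hsub : f^[n] '' Acomp ⊆ U := by
      rintro w ⟨u, hu, rfl⟩
      have := hAsub hu
      rw [hpreim n] at this
      exact this.2
    have hfr : f^[n] z ∈ frontier U :=
      ⟨closure_mono hsub himg, by rwa [hU.interior_eq]⟩
    rcases eq_or_lt_of_le hnm with rfl | hlt
    · exact hzn (by rw [hpreim]; exact ⟨hzD, hzU⟩)
    · have hrr' := hrr (m - n) (Nat.sub_pos_of_lt hlt) (f^[n] z) hfr
        (fun i hi => by
          rw [← Function.iterate_add_apply]
          exact hzD (i + n) (by omega))
      rw [← Function.iterate_add_apply, Nat.sub_add_cancel hnm] at hrr'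
      exact hrr' hzU
  by_contra hcon
  push_neg at hcon
  obtain ⟨hne, hnsub⟩ := hcon
  obtain ⟨w, hwB, hwA⟩ := not_subset.mp hnsub
  have hBc : IsPreconnected Bcomp := hB ▸ isPreconnected_connectedComponentIn
  have hcover : Bcomp ⊆ Acomp ∪ (closure Acomp)ᶜ := by
    intro z hz
    by_cases h : z ∈ closure Acomp
    · left
      by_contra hzA
      exact hkey z ⟨h, fun hi => hzA (by rwa [hAo.interior_eq] at hi)⟩ (hBsub hz)
    · right; exact h
  have h1 : (Bcomp ∩ Acomp).Nonempty := by
    rw [inter_comm]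
    exact hne
  have h2 : (Bcomp ∩ (closure Acomp)ᶜ).Nonempty := by
    refine ⟨w, hwB, fun h => ?_⟩
    exact hkey w ⟨h, fun hi => hwA (by rwa [hAo.interior_eq] at hi)⟩ (hBsub hwB)
  obtain ⟨t, _, htA, htc⟩ :=
    hBc Acomp (closure Acomp)ᶜ hAo isClosed_closure.isOpen_compl hcover h1 h2
  exact htc (subset_closure htA)
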